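/- Let q be a prime power and d ≤ q. Let PU_1 ⊂ P²(F_{q²}) be the degenerate Hermitian curve defined by x_0^{q+1} + x_1^{q+1} = 0, and let V(F) be a plane curve of degree d over F_{q²}. Then |PU_1 ∩ V(F)(F_{q²})| ≤ dq² + 1, with equality if and only if V(F) is a union of d lines each contained in PU_1. -/

import Mathlib

open Finset Polynomial
set_option linter.unusedSectionVars false

namespace Stmt10
variable {K : Type} [Field K]

/-- exponent finsupp (i, d-i-j, j) -/
noncomputable def μ (d i j : ℕ) : Fin 3 →₀ ℕ :=
  Finsupp.single 0 i + Finsupp.single 1 (d - i - j) + Finsupp.single 2 j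

@[simp] lemma μ_apply0 (d i j : ℕ) : μ d i j 0 = i := by simp [μ, Finsupp.single_apply]
@[simp] lemma μ_apply1 (d i j : ℕ) : μ d i j 1 = d - i - j := by simp [μ, Finsupp.single_apply]
@[simp] lemma μ_apply2 (d i j : ℕ) : μ d i j 2 = j := by simp [μ, Finsupp.single_apply]

lemma degree_eq (m : Fin 3 →₀ ℕ) : m.degree = m 0 + m 1 + m 2 := by
  rw [Finsupp.degree_apply, Finset.sum_subset (Finset.subset_univ _)]
  · simp [Fin.sum_univ_three]
  · intro x _ hx; simpa using Finsupp.notMem_support_iff.mp hx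

lemma μ_degree (d i j : ℕ) : (μ d i j).degree = i + (d - i - j) + j := by
  simp [degree_eq]

lemma μ_eq_self {m : Fin 3 →₀ ℕ} {d : ℕ} (hm : m.degree = d) : μ d (m 0) (m 2) = m := by
  have h := degree_eq m
  ext k
  fin_cases k
  · show μ d (m 0) (m 2) 0 = m 0; simp
  · show μ d (m 0) (m 2) 1 = m 1; simp only [μ_apply1]; omega
  · show μ d (m 0) (m 2) 2 = m 2; simp

lemma homog_degree {F : MvPolynomial (Fin 3) K} {d : ℕ} (hFd : F.IsHomogeneous d)
    {m : Fin 3 →₀ ℕ} (hm : MvPolynomial.coeff m F ≠ 0) : m.degree = d := by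
  rw [Finsupp.degree_eq_weight_one]; exact hFd hm

variable {F : MvPolynomial (Fin 3) K} {d : ℕ}

lemma coeff_μ_eq_zero (hFd : F.IsHomogeneous d) {i j : ℕ} (h : d < i + j) :
    MvPolynomial.coeff (μ d i j) F = 0 := by
  apply hFd.coeff_eq_zero
  rw [μ_degree]
  omega

/-- Master expansion lemma -/
lemma eval_expand (hFd : F.IsHomogeneous d) (v : Fin 3 → K) :
    MvPolynomial.eval v F =
      ∑ i ∈ range (d + 1), ∑ j ∈ range (d + 1),
        MvPolynomial.coeff (μ d i j) F * (v 0 ^ i * v 1 ^ (d - i - j) * v 2 ^ j) := by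
  rw [MvPolynomial.eval_eq']
  rw [← Finset.sum_product']
  rw [Finset.sum_of_injOn (fun m => (m 0, m 2)) ?inj ?maps ?zero ?eq]
  case inj =>
    intro m hm m' hm' h
    simp only [Finset.mem_coe, MvPolynomial.mem_support_iff] at hm hm'
    have h1 : (m 0, m 2) = (m' 0, m' 2) := h
    have e1 := μ_eq_self (homog_degree hFd hm)
    have e2 := μ_eq_self (homog_degree hFd hm')
    rw [← e1, ← e2]
    rw [Prod.mk.injEq] at h1
    rw [h1.1, h1.2]
  case maps =>
    intro m hm
    simp only [Finset.mem_coe, MvPolynomial.mem_support_iff] at hm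
    have hdeg := homog_degree hFd hm
    have := degree_eq m
    simp only [Finset.coe_product, Set.mem_prod, Finset.mem_coe, Finset.mem_range]
    constructor <;> omega
  case zero =>
    intro p hp hnp
    have : MvPolynomial.coeff (μ d p.1 p.2) F = 0 := by
      by_contra hc
      apply hnp
      refine ⟨μ d p.1 p.2, MvPolynomial.mem_support_iff.mpr hc, ?_⟩
      simp
    rw [this, zero_mul]
  case eq =>
    intro m hm
    simp only [Finset.mem_coe, MvPolynomial.mem_support_iff] at hm
    rw [μ_eq_self (homog_degree hFd hm)]
    rw [Fin.prod_univ_three]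
    have hdeg := homog_degree hFd hm
    have h3 := degree_eq m
    have : m 1 = d - m 0 - m 2 := by omega
    rw [this]


/-- the coefficient polynomial of `s^j` in `F(t,1,s)` -/
noncomputable def cp (F : MvPolynomial (Fin 3) K) (d j : ℕ) : Polynomial K :=
  ∑ i ∈ range (d + 1), Polynomial.C (MvPolynomial.coeff (μ d i j) F) * Polynomial.X ^ i

lemma cp_coeff (F : MvPolynomial (Fin 3) K) (d j i : ℕ) :
    (cp F d j).coeff i =
      if i ≤ d then MvPolynomial.coeff (μ d i j) F else 0 := by
  rw [cp, Polynomial.finset_sum_coeff]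
  simp only [Polynomial.coeff_C_mul, Polynomial.coeff_X_pow, mul_ite, mul_one, mul_zero]
  simp only [eq_comm (a := i)]
  rw [Finset.sum_ite_eq' (range (d+1)) i (fun i' => MvPolynomial.coeff (μ d i' j) F)]
  simp [Nat.lt_succ_iff]

lemma cp_eval (F : MvPolynomial (Fin 3) K) (d j : ℕ) (t : K) :
    (cp F d j).eval t = ∑ i ∈ range (d + 1), MvPolynomial.coeff (μ d i j) F * t ^ i := by
  simp [cp, Polynomial.eval_finset_sum]

/-- F(t,1,s) = ∑_j cp j (t) s^j -/
lemma eval_line (hFd : F.IsHomogeneous d) (t s : K) :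
    MvPolynomial.eval ![t, 1, s] F =
      ∑ j ∈ range (d + 1), (cp F d j).eval t * s ^ j := by
  rw [eval_expand hFd]
  rw [Finset.sum_comm]
  apply Finset.sum_congr rfl
  intro j _
  rw [cp_eval, Finset.sum_mul]
  apply Finset.sum_congr rfl
  intro i _
  simp only [Matrix.cons_val_zero, Matrix.cons_val_one, Matrix.head_cons,
    Matrix.cons_val_two, Matrix.tail_cons]
  ring

lemma cp_natDegree_le (hFd : F.IsHomogeneous d) (j : ℕ) :
    (cp F d j).natDegree ≤ d - j := by
  rw [Polynomial.natDegree_le_iff_coeff_eq_zero]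
  intro i hi
  rw [cp_coeff]
  split_ifs with h
  · exact coeff_μ_eq_zero hFd (by omega)
  · rfl

lemma F_eq_zero_of_cp (hFd : F.IsHomogeneous d)
    (h : ∀ j ∈ range (d + 1), cp F d j = 0) : F = 0 := by
  rw [← MvPolynomial.support_eq_empty, Finset.eq_empty_iff_forall_notMem]
  intro m hm
  rw [MvPolynomial.mem_support_iff] at hm
  have hdeg := homog_degree hFd hm
  have h3 := degree_eq m
  have h2 : m 2 ∈ range (d + 1) := by rw [Finset.mem_range]; omega
  have := h (m 2) h2
  have hc := cp_coeff F d (m 2) (m 0)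
  rw [this] at hc
  simp only [Polynomial.coeff_zero] at hc
  rw [if_pos (by omega : m 0 ≤ d)] at hc
  rw [μ_eq_self hdeg] at hc
  exact hm hc.symm

/-- scaling: eval (a • v) F = a^d * eval v F -/
lemma eval_smul (hFd : F.IsHomogeneous d) (a : K) (v : Fin 3 → K) :
    MvPolynomial.eval (a • v) F = a ^ d * MvPolynomial.eval v F := by
  rw [eval_expand hFd, eval_expand hFd, Finset.mul_sum]
  apply Finset.sum_congr rfl
  intro i _
  rw [Finset.mul_sum]
  apply Finset.sum_congr rfl
  intro j _
  by_cases hc : MvPolynomial.coeff (μ d i j) F = 0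
  · rw [hc]; ring
  · have hdeg : i + (d - i - j) + j = d := by
      have h1 : ¬ (d < i + j) := fun h => hc (coeff_μ_eq_zero hFd h)
      omega
    simp only [Pi.smul_apply, smul_eq_mul]
    rw [mul_pow, mul_pow, mul_pow]
    calc MvPolynomial.coeff (μ d i j) F *
          (a ^ i * v 0 ^ i * (a ^ (d-i-j) * v 1 ^ (d-i-j)) * (a ^ j * v 2 ^ j))
        = (a ^ i * a ^ (d-i-j) * a ^ j) * (MvPolynomial.coeff (μ d i j) F *
            (v 0 ^ i * v 1 ^ (d-i-j) * v 2 ^ j)) := by ring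
      _ = _ := by rw [← pow_add, ← pow_add, hdeg]


variable [Fintype K] [DecidableEq K]

/-- number of roots of a nonzero polynomial is at most its natDegree -/
lemma card_roots_le {p : Polynomial K} (hp : p ≠ 0) :
    ((univ : Finset K).filter fun x => p.eval x = 0).card ≤ p.natDegree := by
  calc ((univ : Finset K).filter fun x => p.eval x = 0).card
      ≤ p.roots.toFinset.card := by
        apply Finset.card_le_card
        intro x hx
        rw [Finset.mem_filter] at hx
        rw [Multiset.mem_toFinset, Polynomial.mem_roots hp]
        exact hx.2
    _ ≤ Multiset.card p.roots := Multiset.toFinset_card_le _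
    _ ≤ p.natDegree := Polynomial.card_roots' p

/-- the number of (q+1)-st roots of -1 in a field with q² elements -/
lemma card_T {q : ℕ} (hq2 : 2 ≤ q) (hK : Fintype.card K = q ^ 2) :
    ((univ : Finset K).filter fun t => t ^ (q + 1) + 1 = 0).card = q + 1 := by
  obtain ⟨k, rfl⟩ : ∃ k, q = k + 2 := ⟨q - 2, by omega⟩
  set q := k + 2 with hqdef
  set B := (univ : Finset K).filter (fun y => y ^ (q - 1) = 1) with hB
  have hBcard : B.card ≤ q - 1 := by
    have h1 : (Polynomial.X ^ (q-1) - Polynomial.C (1:K)) ≠ 0 :=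
      Polynomial.X_pow_sub_C_ne_zero (by omega) 1
    calc B.card ≤ (Polynomial.X ^ (q-1) - Polynomial.C (1:K)).natDegree := by
          refine le_trans (le_of_eq ?_) (card_roots_le h1)
          congr 1
          ext y
          simp [hB, sub_eq_zero]
      _ = q - 1 := Polynomial.natDegree_X_pow_sub_C
  set A := (univ : Finset K).filter (fun x : K => x ≠ 0) with hA
  have hAcard : A.card = q ^ 2 - 1 := by
    rw [hA, Finset.filter_ne', Finset.card_erase_of_mem (Finset.mem_univ 0),
      Finset.card_univ, hK]
  have hmap : ∀ x ∈ A, x ^ (q + 1) ∈ B := by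
    intro x hx
    rw [hA, Finset.mem_filter] at hx
    rw [hB, Finset.mem_filter]
    refine ⟨Finset.mem_univ _, ?_⟩
    rw [← pow_mul]
    have he : (q + 1) * (q - 1) = q ^ 2 - 1 := by
      have hsq : 1 ≤ q ^ 2 := Nat.one_le_pow _ _ (by omega)
      zify [show 1 ≤ q by omega, hsq]
      ring

    rw [he, ← hK]
    exact FiniteField.pow_card_sub_one_eq_one x hx.2
  have hfib : A.card = ∑ y ∈ B, (A.filter fun x => x ^ (q+1) = y).card :=
    Finset.card_eq_sum_card_fiberwise hmap
  have hfible : ∀ y : K, y ≠ 0 → (A.filter fun x => x ^ (q+1) = y).card ≤ q + 1 := by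
    intro y hy
    have h1 : (Polynomial.X ^ (q+1) - Polynomial.C y) ≠ 0 :=
      Polynomial.X_pow_sub_C_ne_zero (by omega) y
    calc (A.filter fun x => x ^ (q+1) = y).card
        ≤ ((univ : Finset K).filter fun x => (Polynomial.X ^ (q+1) -
            Polynomial.C y : Polynomial K).eval x = 0).card := by
          apply Finset.card_le_card
          intro x hx
          rw [Finset.mem_filter] at hx ⊢
          refine ⟨Finset.mem_univ _, ?_⟩
          simp [sub_eq_zero, hx.2]
      _ ≤ (Polynomial.X ^ (q+1) - Polynomial.C y).natDegree := card_roots_le h1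
      _ = q + 1 := Polynomial.natDegree_X_pow_sub_C
  have hBne : ∀ y ∈ B, (y : K) ≠ 0 := by
    intro y hy h0
    rw [hB, Finset.mem_filter] at hy
    rw [h0] at hy
    simp only [zero_pow (by omega : q - 1 ≠ 0)] at hy
    exact zero_ne_one hy.2
  have key : ∀ y ∈ B, (A.filter fun x => x ^ (q+1) = y).card = q + 1 := by
    by_contra hcon
    push_neg at hcon
    obtain ⟨y0, hy0, hne⟩ := hcon
    have hlt : (A.filter fun x => x ^ (q+1) = y0).card < q + 1 :=
      lt_of_le_of_ne (hfible y0 (hBne y0 hy0)) hne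
    have h5 : A.card < B.card * (q + 1) := by
      rw [hfib]
      calc ∑ y ∈ B, (A.filter fun x => x ^ (q+1) = y).card
          < ∑ _y ∈ B, (q + 1) := by
            apply Finset.sum_lt_sum
            · exact fun y hy => hfible y (hBne y hy)
            · exact ⟨y0, hy0, hlt⟩
        _ = B.card * (q + 1) := by rw [Finset.sum_const, smul_eq_mul]
    have h6 : q ^ 2 - 1 < (q - 1) * (q + 1) := by
      calc q ^ 2 - 1 = A.card := hAcard.symm
        _ < B.card * (q+1) := h5
        _ ≤ (q - 1) * (q + 1) := Nat.mul_le_mul_right _ hBcard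
    have h7 : (q - 1) * (q + 1) = q ^ 2 - 1 := by
      have hsq : 1 ≤ q ^ 2 := Nat.one_le_pow _ _ (by omega)
      zify [show 1 ≤ q by omega, hsq]
      ring
    omega
  have hm1 : (-1 : K) ∈ B := by
    rw [hB, Finset.mem_filter]
    refine ⟨Finset.mem_univ _, ?_⟩
    rcases Nat.even_or_odd q with he | ho
    · have hchar : ringChar K = 2 := by
        rw [FiniteField.even_card_iff_char_two, hK]
        have : Even (q ^ 2) := (Nat.even_pow).mpr ⟨he, by omega⟩
        exact Nat.even_iff.mp this
      haveI : CharP K 2 := hchar ▸ ringChar.charP K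
      have hn : (-1 : K) = 1 := by
        have := CharTwo.neg_eq (R := K) 1
        simpa using this
      rw [hn, one_pow]
    · have hev : Even (q - 1) := by
        rcases ho with ⟨m, hm⟩
        exact ⟨m, by omega⟩
      exact hev.neg_one_pow
  have hkey := key (-1) hm1
  have hset : ((univ : Finset K).filter fun t => t ^ (q + 1) + 1 = 0)
      = A.filter (fun x => x ^ (q+1) = -1) := by
    ext t
    simp only [hA, Finset.mem_filter, Finset.mem_univ, true_and, Finset.filter_filter]
    constructor
    · intro h
      have ht : t ^ (q+1) = -1 := by linear_combination h
      refine ⟨fun h0 => ?_, ht⟩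
      rw [h0, zero_pow (by omega : q + 1 ≠ 0)] at ht
      exact one_ne_zero (neg_eq_zero.mp ht.symm)
    · rintro ⟨_, h⟩
      rw [h]; ring
  rw [hset]
  exact hkey

section Count
variable {q : ℕ}

lemma vec_smul (a : K) (v : Fin 3 → K) (k : Fin 3) : (a • v) k = a * v k := rfl

lemma pred_smul (hFd : F.IsHomogeneous d) {a : K} (ha : a ≠ 0) (v : Fin 3 → K) :
    (((a • v) 0 ^ (q + 1) + (a • v) 1 ^ (q + 1) = 0) ∧ MvPolynomial.eval (a • v) F = 0) ↔
    ((v 0 ^ (q + 1) + v 1 ^ (q + 1) = 0) ∧ MvPolynomial.eval v F = 0) := by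
  rw [eval_smul hFd]
  rw [vec_smul, vec_smul]
  have h1 : (a * v 0) ^ (q+1) + (a * v 1) ^ (q+1)
      = a ^ (q+1) * (v 0 ^ (q+1) + v 1 ^ (q+1)) := by ring
  rw [h1, mul_eq_zero, mul_eq_zero]
  have h2 : a ^ (q+1) ≠ 0 := pow_ne_zero _ ha
  have h3 : a ^ d ≠ 0 := pow_ne_zero _ ha
  tauto

lemma e2_ne_zero : (![0,0,1] : Fin 3 → K) ≠ 0 := by
  intro h
  have := congrFun h 2
  simp at this

lemma vec1_ne_zero {v : Fin 3 → K} (h : v 1 = 1) : v ≠ 0 := by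
  intro h0
  rw [h0] at h
  simp at h

lemma eq_smul_e2 {v : Fin 3 → K} (h0 : v 0 = 0) (h1 : v 1 = 0) :
    v = v 2 • ![0,0,1] := by
  ext k
  fin_cases k
  · simpa using h0
  · simpa using h1
  · simp

open Projectivization in
/-- The counting formula for points on the degenerate Hermitian curve lying on V(F). -/
lemma count_formula (hFd : F.IsHomogeneous d) :
    Nat.card {x : Projectivization K (Fin 3 → K) //
        (x.rep 0 ^ (q + 1) + x.rep 1 ^ (q + 1) = 0) ∧ MvPolynomial.eval x.rep F = 0}
    = (if MvPolynomial.eval ![0,0,1] F = 0 then 1 else 0)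
      + ∑ t ∈ (univ : Finset K).filter (fun t => t ^ (q+1) + 1 = 0),
          ((univ : Finset K).filter fun s => MvPolynomial.eval ![t,1,s] F = 0).card := by
  classical
  set pred : (Fin 3 → K) → Prop :=
    fun v => (v 0 ^ (q + 1) + v 1 ^ (q + 1) = 0) ∧ MvPolynomial.eval v F = 0 with hpred
  -- step 1: the equivalence with normalized vectors
  have key : ∀ (v : Fin 3 → K) (hv : v ≠ 0),
      pred (Projectivization.mk K v hv).rep ↔ pred v := by
    intro v hv
    obtain ⟨a, ha⟩ := Projectivization.exists_smul_eq_mk_rep K v hv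
    rw [Units.smul_def] at ha
    rw [← ha]
    exact pred_smul hFd (Units.ne_zero a) v
  have EQ : {x : Projectivization K (Fin 3 → K) // pred x.rep} ≃
      {v : Fin 3 → K // (v = ![0,0,1] ∨ v 1 = 1) ∧ pred v} := by
    refine ⟨fun x => ?_, fun v => ?_, ?_, ?_⟩
    · -- toFun
      refine ⟨if x.val.rep 1 = 0 then ![0,0,1] else (x.val.rep 1)⁻¹ • x.val.rep, ?_⟩
      obtain ⟨x, hx⟩ := x
      split_ifs with h1
      · -- x = P case
        have h0 : x.rep 0 = 0 := by
          have := hx.1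
          rw [h1, zero_pow (by omega : q + 1 ≠ 0), add_zero,
            pow_eq_zero_iff (by omega : q + 1 ≠ 0)] at this
          exact this
        have h2 : x.rep 2 ≠ 0 := by
          intro h2
          apply x.rep_nonzero
          ext k; fin_cases k <;> simp [h0, h1, h2]
        have hsm : ![0,0,1] = (x.rep 2)⁻¹ • x.rep := by
          have h3 := eq_smul_e2 h0 h1
          calc (![0,0,1] : Fin 3 → K)
              = (x.rep 2)⁻¹ • (x.rep 2 • ![0,0,1]) := by
                rw [smul_smul, inv_mul_cancel₀ h2, one_smul]
            _ = (x.rep 2)⁻¹ • x.rep := by rw [← h3]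
        refine ⟨Or.inl rfl, ?_⟩
        rw [hpred, hsm]
        exact (pred_smul hFd (inv_ne_zero h2) x.rep).mpr hx
      · refine ⟨Or.inr (by simp [vec_smul, inv_mul_cancel₀ h1]), ?_⟩
        exact (pred_smul hFd (inv_ne_zero h1) x.rep).mpr hx
    · -- invFun
      obtain ⟨v, hv⟩ := v
      have hvne : v ≠ 0 := by
        rcases hv.1 with h | h
        · rw [h]; exact e2_ne_zero
        · exact vec1_ne_zero h
      exact ⟨Projectivization.mk K v hvne, (key v hvne).mpr hv.2⟩
    · -- left inverse
      rintro ⟨x, hx⟩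
      apply Subtype.ext
      simp only
      split_ifs with h1
      · -- rep 1 = 0
        have h0 : x.rep 0 = 0 := by
          have := hx.1
          rw [h1, zero_pow (by omega : q + 1 ≠ 0), add_zero,
            pow_eq_zero_iff (by omega : q + 1 ≠ 0)] at this
          exact this
        have h2 : x.rep 2 ≠ 0 := by
          intro h2
          apply x.rep_nonzero
          ext k; fin_cases k <;> simp [h0, h1, h2]
        have hsm : ![0,0,1] = (x.rep 2)⁻¹ • x.rep := by
          have h3 := eq_smul_e2 h0 h1
          calc (![0,0,1] : Fin 3 → K)
              = (x.rep 2)⁻¹ • (x.rep 2 • ![0,0,1]) := by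
                rw [smul_smul, inv_mul_cancel₀ h2, one_smul]
            _ = (x.rep 2)⁻¹ • x.rep := by rw [← h3]
        conv_rhs => rw [← Projectivization.mk_rep x]
        apply (Projectivization.mk_eq_mk_iff' K _ _ _ _).mpr
        exact ⟨(x.rep 2)⁻¹, hsm.symm⟩
      · conv_rhs => rw [← Projectivization.mk_rep x]
        apply (Projectivization.mk_eq_mk_iff' K _ _ _ _).mpr
        exact ⟨(x.rep 1)⁻¹, rfl⟩
    · -- right inverse
      rintro ⟨v, hv⟩
      apply Subtype.ext
      simp only
      have hvne : v ≠ 0 := by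
        rcases hv.1 with h | h
        · rw [h]; exact e2_ne_zero
        · exact vec1_ne_zero h
      obtain ⟨a, ha⟩ := Projectivization.exists_smul_eq_mk_rep K v hvne
      rw [Units.smul_def] at ha
      rcases hv.1 with h | h
      · -- v = e2
        have h1 : (Projectivization.mk K v hvne).rep 1 = 0 := by
          rw [← ha, vec_smul, h]
          simp
        rw [if_pos h1, h]
      · have h1 : (Projectivization.mk K v hvne).rep 1 = (a : K) := by
          rw [← ha, vec_smul, h, mul_one]
        rw [if_neg (h1 ▸ Units.ne_zero a)]
        rw [h1, ← ha, smul_smul, inv_mul_cancel₀ (Units.ne_zero a), one_smul]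
  rw [Nat.card_congr EQ, Nat.card_eq_fintype_card, Fintype.card_subtype]
  -- step 2: split the finset
  have hsplit : (univ : Finset (Fin 3 → K)).filter
        (fun v => (v = ![0,0,1] ∨ v 1 = 1) ∧ pred v)
      = ((univ : Finset (Fin 3 → K)).filter (fun v => v = ![0,0,1] ∧ pred v))
        ∪ ((univ : Finset (Fin 3 → K)).filter (fun v => v 1 = 1 ∧ pred v)) := by
    rw [← Finset.filter_or]
    apply Finset.filter_congr
    intro v _
    tauto
  rw [hsplit, Finset.card_union_of_disjoint]
  swap
  · rw [Finset.disjoint_filter]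
    rintro v _ ⟨rfl, -⟩ ⟨h1, -⟩
    simp at h1
  congr 1
  · -- P part
    by_cases hP : MvPolynomial.eval ![(0:K),0,1] F = 0
    · rw [if_pos hP]
      have : (univ : Finset (Fin 3 → K)).filter (fun v => v = ![0,0,1] ∧ pred v)
          = {![0,0,1]} := by
        ext v
        simp only [Finset.mem_filter, Finset.mem_univ, true_and, Finset.mem_singleton]
        constructor
        · exact fun h => h.1
        · rintro rfl
          refine ⟨rfl, ?_, hP⟩
          simp [zero_pow (by omega : q + 1 ≠ 0)]
      rw [this, Finset.card_singleton]
    · rw [if_neg hP]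
      have : (univ : Finset (Fin 3 → K)).filter (fun v => v = ![0,0,1] ∧ pred v)
          = ∅ := by
        ext v
        simp only [Finset.mem_filter, Finset.mem_univ, true_and, Finset.notMem_empty,
          iff_false, not_and]
        rintro rfl h
        exact hP h.2
      rw [this, Finset.card_empty]
  · -- line part
    rw [Finset.card_eq_sum_card_fiberwise
      (f := fun v : Fin 3 → K => v 0)
      (t := (univ : Finset K).filter (fun t => t ^ (q+1) + 1 = 0))]
    swap
    · intro v hv
      rw [Finset.mem_coe, Finset.mem_filter] at hv
      obtain ⟨-, h1, hG, -⟩ := hv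
      rw [Finset.mem_coe, Finset.mem_filter]
      refine ⟨Finset.mem_univ _, ?_⟩
      rw [h1, one_pow] at hG
      exact hG
    apply Finset.sum_congr rfl
    intro t ht
    rw [Finset.mem_filter] at ht
    apply Finset.card_nbij' (i := fun v => v 2) (j := fun s => ![t,1,s])
    · intro v hv
      simp only [Finset.mem_coe, Finset.mem_filter, Finset.mem_univ, true_and] at hv ⊢
      obtain ⟨⟨h1, -, hev⟩, h0⟩ := hv
      have : v = ![t, 1, v 2] := by
        ext k; fin_cases k
        · simpa using h0
        · simpa using h1
        · simp
      rw [← this]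
      exact hev
    · intro s hs
      simp only [Finset.mem_coe, Finset.mem_filter, Finset.mem_univ, true_and] at hs ⊢
      refine ⟨⟨by simp, ?_, hs⟩, by simp⟩
      simpa using ht.2
    · intro v hv
      simp only [Finset.mem_coe, Finset.mem_filter, Finset.mem_univ, true_and] at hv
      obtain ⟨⟨h1, -⟩, h0⟩ := hv
      ext k; fin_cases k
      · simpa using h0.symm
      · simpa using h1.symm
      · simp
    · intro s _
      simp

/-- the restriction of F to the line x0 = t·x1, as polynomial in s -/
noncomputable def gp (F : MvPolynomial (Fin 3) K) (d : ℕ) (t : K) : Polynomial K :=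
  ∑ j ∈ range (d + 1), Polynomial.C ((cp F d j).eval t) * Polynomial.X ^ j

lemma gp_coeff (F : MvPolynomial (Fin 3) K) (d : ℕ) (t : K) (j : ℕ) :
    (gp F d t).coeff j = if j ≤ d then (cp F d j).eval t else 0 := by
  rw [gp, Polynomial.finset_sum_coeff]
  simp only [Polynomial.coeff_C_mul, Polynomial.coeff_X_pow, mul_ite, mul_one, mul_zero]
  simp only [eq_comm (a := j)]
  rw [Finset.sum_ite_eq' (range (d+1)) j (fun j' => (cp F d j').eval t)]
  simp [Nat.lt_succ_iff]

lemma gp_eval (hFd : F.IsHomogeneous d) (t s : K) :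
    (gp F d t).eval s = MvPolynomial.eval ![t, 1, s] F := by
  rw [eval_line hFd, gp, Polynomial.eval_finset_sum]
  simp

/-- linear form cutting out the line x0 = t x1 -/
noncomputable def lf (t : K) : (Fin 3 → K) →ₗ[K] K :=
  LinearMap.proj 0 - t • LinearMap.proj 1

lemma mem_ker_lf (t : K) (v : Fin 3 → K) :
    v ∈ LinearMap.ker (lf t) ↔ v 0 = t * v 1 := by
  rw [LinearMap.mem_ker, lf]
  simp only [LinearMap.sub_apply, LinearMap.smul_apply, LinearMap.proj_apply, smul_eq_mul]
  rw [sub_eq_zero]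

lemma finrank_ker_lf (t : K) : Module.finrank K (LinearMap.ker (lf t)) = 2 := by
  have hsurj : LinearMap.range (lf t) = ⊤ := by
    rw [LinearMap.range_eq_top]
    intro c
    refine ⟨![c, 0, 0], ?_⟩
    simp [lf]
  have h1 := LinearMap.finrank_range_add_finrank_ker (lf t)
  rw [hsurj, finrank_top] at h1
  have h2 : Module.finrank K (Fin 3 → K) = 3 := by
    rw [Module.finrank_pi]
    simp
  have h3 : Module.finrank K K = 1 := Module.finrank_self K
  omega

lemma submodule_le_ker {t : K} (x : Projectivization K (Fin 3 → K)) :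
    x.submodule ≤ LinearMap.ker (lf t) ↔ x.rep 0 = t * x.rep 1 := by
  rw [Projectivization.submodule_eq, Submodule.span_singleton_le_iff_mem, mem_ker_lf]

/-- Product formula in the equality case -/
lemma product_formula {E : Finset K} (hF : F ≠ 0) (hFd : F.IsHomogeneous d)
    (hd : 1 ≤ d) (hEcard : E.card = d)
    (hEcp : ∀ t ∈ E, ∀ j ∈ range (d + 1), (cp F d j).eval t = 0) :
    ∃ u : K, u ≠ 0 ∧ ∀ v : Fin 3 → K,
      MvPolynomial.eval v F = u * ∏ t ∈ E, (v 0 - t * v 1) := by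
  have hcpj : ∀ j, 1 ≤ j → j ≤ d → cp F d j = 0 := by
    intro j hj1 hjd
    apply Polynomial.eq_zero_of_natDegree_lt_card_of_eval_eq_zero' (cp F d j) E
    · intro t ht; exact hEcp t ht j (mem_range.mpr (by omega))
    · exact lt_of_le_of_lt (cp_natDegree_le hFd j) (by omega)
  have hc0 : cp F d 0 ≠ 0 := by
    intro h0
    apply hF
    apply F_eq_zero_of_cp hFd
    intro j hj
    rw [mem_range] at hj
    rcases Nat.eq_zero_or_pos j with rfl | hjp
    · exact h0
    · exact hcpj j hjp (by omega)
  set u := (cp F d 0).coeff d with hu_def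
  set P0 := ∏ t ∈ E, (Polynomial.X - Polynomial.C t) with hP0
  have hP0monic : P0.Monic := monic_prod_of_monic _ _ (fun t _ => monic_X_sub_C t)
  have hP0deg : P0.natDegree = d := by
    rw [hP0, Polynomial.natDegree_prod _ _ (fun t _ => Polynomial.X_sub_C_ne_zero t)]
    simp [Polynomial.natDegree_X_sub_C, hEcard]
  have hc0deg : (cp F d 0).natDegree ≤ d := by
    have := cp_natDegree_le hFd 0
    omega
  have hc0E : ∀ t ∈ E, (cp F d 0).eval t = 0 :=
    fun t ht => hEcp t ht 0 (mem_range.mpr (by omega))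
  have hu : u ≠ 0 := by
    intro h0
    apply hc0
    apply Polynomial.eq_zero_of_natDegree_lt_card_of_eval_eq_zero' _ E hc0E
    rw [hEcard]
    rcases lt_or_eq_of_le hc0deg with h | h
    · exact h
    · exfalso
      apply hc0
      rw [← Polynomial.leadingCoeff_eq_zero, Polynomial.leadingCoeff, h]
      exact h0
  have hP0coeffd : P0.coeff d = 1 := by
    have := hP0monic.coeff_natDegree
    rwa [hP0deg] at this
  set r := cp F d 0 - Polynomial.C u * P0 with hr_def
  have hrd : r.natDegree ≤ d := by
    apply le_trans (Polynomial.natDegree_sub_le _ _)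
    apply max_le hc0deg
    apply le_trans (Polynomial.natDegree_mul_le)
    simp [hP0deg]
  have hrcoeffd : r.coeff d = 0 := by
    rw [hr_def, Polynomial.coeff_sub, Polynomial.coeff_C_mul, hP0coeffd, mul_one, hu_def,
      sub_self]
  have hr0 : r = 0 := by
    by_contra hr
    apply hr
    apply Polynomial.eq_zero_of_natDegree_lt_card_of_eval_eq_zero' _ E
    · intro t ht
      rw [hr_def, Polynomial.eval_sub, Polynomial.eval_mul, Polynomial.eval_C, hc0E t ht,
        hP0, Polynomial.eval_prod]
      rw [Finset.prod_eq_zero ht (by simp : Polynomial.eval t (Polynomial.X - Polynomial.C t) = 0)]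
      ring
    · rw [hEcard]
      rcases lt_or_eq_of_le hrd with h | h
      · exact h
      · exfalso
        apply hr
        rw [← Polynomial.leadingCoeff_eq_zero, Polynomial.leadingCoeff, h]
        exact hrcoeffd
  have hc0eq : cp F d 0 = Polynomial.C u * P0 := by
    have := sub_eq_zero.mp hr0
    exact this
  refine ⟨u, hu, ?_⟩
  intro v
  rw [eval_expand hFd]
  have hj0 : ∀ i ∈ range (d + 1),
      (∑ j ∈ range (d + 1), MvPolynomial.coeff (μ d i j) F *
        (v 0 ^ i * v 1 ^ (d - i - j) * v 2 ^ j))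
      = (cp F d 0).coeff i * (v 0 ^ i * v 1 ^ (d - i)) := by
    intro i hi
    rw [mem_range, Nat.lt_succ_iff] at hi
    rw [Finset.sum_eq_single 0]
    · rw [cp_coeff, if_pos hi, pow_zero, mul_one, Nat.sub_zero]
    · intro j hj hjne
      rw [mem_range, Nat.lt_succ_iff] at hj
      have hz : cp F d j = 0 := hcpj j (by omega) hj
      have : MvPolynomial.coeff (μ d i j) F = (cp F d j).coeff i := by
        rw [cp_coeff, if_pos hi]
      rw [this, hz, Polynomial.coeff_zero, zero_mul]
    · intro h
      exact absurd (mem_range.mpr (by omega)) h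
  rw [Finset.sum_congr rfl hj0]
  by_cases hv1 : v 1 = 0
  · -- v 1 = 0 case
    rw [Finset.sum_eq_single d]
    · rw [Nat.sub_self, pow_zero, mul_one]
      have hcd : (cp F d 0).coeff d = u := rfl
      rw [hcd]
      have : ∀ t ∈ E, v 0 - t * v 1 = v 0 := by
        intro t _
        rw [hv1, mul_zero, sub_zero]
      rw [Finset.prod_congr rfl this, Finset.prod_const, hEcard]
    · intro i hi hine
      rw [mem_range, Nat.lt_succ_iff] at hi
      rw [hv1, zero_pow (by omega : d - i ≠ 0)]
      ring
    · intro h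
      exact absurd (mem_range.mpr (by omega)) h
  · -- v 1 ≠ 0 case
    have heval : (cp F d 0).eval (v 0 / v 1) = u * ∏ t ∈ E, (v 0 / v 1 - t) := by
      rw [hc0eq, Polynomial.eval_mul, Polynomial.eval_C, hP0, Polynomial.eval_prod]
      congr 1
      apply Finset.prod_congr rfl
      intro t _
      simp
    have hsum : (∑ i ∈ range (d + 1), (cp F d 0).coeff i * (v 0 ^ i * v 1 ^ (d - i)))
        = v 1 ^ d * (cp F d 0).eval (v 0 / v 1) := by
      rw [Polynomial.eval_eq_sum_range' (lt_of_le_of_lt hc0deg (lt_add_one d)), Finset.mul_sum]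
      apply Finset.sum_congr rfl
      intro i hi
      rw [mem_range, Nat.lt_succ_iff] at hi
      have hpow : v 1 ^ d = v 1 ^ (d - i) * v 1 ^ i := by
        rw [← pow_add]
        congr 1
        omega
      rw [hpow, div_pow]
      field_simp
    rw [hsum, heval]
    rw [show v 1 ^ d = ∏ _t ∈ E, v 1 by rw [Finset.prod_const, hEcard]]
    rw [← mul_assoc, mul_comm (∏ _t ∈ E, v 1) u, mul_assoc, ← Finset.prod_mul_distrib]
    congr 1
    apply Finset.prod_congr rfl
    intro t _
    rw [mul_sub, mul_div_cancel₀ _ hv1]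
    ring

open Projectivization in
/-- classification of 2-dim subspaces inside the Hermitian cone -/
lemma classify_line {q : ℕ} {W : Submodule K (Fin 3 → K)}
    (hW2 : Module.finrank K W = 2)
    (hWG : ∀ x : Projectivization K (Fin 3 → K), x.submodule ≤ W →
      x.rep 0 ^ (q + 1) + x.rep 1 ^ (q + 1) = 0) :
    ∃ t : K, (t ^ (q + 1) + 1 = 0) ∧ W = LinearMap.ker (lf t) := by
  -- (a) the Hermitian form vanishes on W
  have hGW : ∀ w ∈ W, w 0 ^ (q+1) + w 1 ^ (q+1) = 0 := by
    intro w hw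
    by_cases hw0 : w = 0
    · rw [hw0]
      simp [zero_pow (by omega : q + 1 ≠ 0)]
    · have hsub : (Projectivization.mk K w hw0).submodule ≤ W := by
        rw [Projectivization.submodule_mk, Submodule.span_singleton_le_iff_mem]
        exact hw
      have hG := hWG _ hsub
      obtain ⟨a, ha⟩ := Projectivization.exists_smul_eq_mk_rep K w hw0
      rw [Units.smul_def] at ha
      rw [← ha] at hG
      rw [vec_smul, vec_smul] at hG
      have h1 : ((a:K) * w 0) ^ (q+1) + ((a:K) * w 1) ^ (q+1)
          = (a:K) ^ (q+1) * (w 0 ^ (q+1) + w 1 ^ (q+1)) := by ring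
      rw [h1, mul_eq_zero] at hG
      rcases hG with h | h
      · exact absurd h (pow_ne_zero _ (Units.ne_zero a))
      · exact h
  -- (b)
  have hW10 : ∀ w ∈ W, w 1 = 0 → w 0 = 0 := by
    intro w hw h1
    have := hGW w hw
    rw [h1, zero_pow (by omega : q + 1 ≠ 0), add_zero,
      pow_eq_zero_iff (by omega : q + 1 ≠ 0)] at this
    exact this
  -- (c)
  have hex : ∃ w ∈ W, w 1 ≠ 0 := by
    by_contra hcon
    push_neg at hcon
    have hle : W ≤ (Submodule.span K {(![0,0,1] : Fin 3 → K)}) := by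
      intro w hw
      rw [Submodule.mem_span_singleton]
      exact ⟨w 2, (eq_smul_e2 (hW10 w hw (hcon w hw)) (hcon w hw)).symm⟩
    have h1 := Submodule.finrank_mono hle
    rw [hW2, finrank_span_singleton e2_ne_zero] at h1
    omega
  obtain ⟨w, hwW, hw1⟩ := hex
  set w' := (w 1)⁻¹ • w with hw'
  have hw'W : w' ∈ W := W.smul_mem _ hwW
  have hw'1 : w' 1 = 1 := by
    rw [hw', vec_smul, inv_mul_cancel₀ hw1]
  set t := w' 0 with ht_def
  have ht : t ^ (q+1) + 1 = 0 := by
    have := hGW w' hw'W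
    rwa [hw'1, one_pow] at this
  refine ⟨t, ht, ?_⟩
  have hWle : W ≤ LinearMap.ker (lf t) := by
    intro v hv
    rw [mem_ker_lf]
    set u := v - v 1 • w' with hu_def
    have hu : u ∈ W := W.sub_mem hv (W.smul_mem _ hw'W)
    have hu1 : u 1 = 0 := by
      rw [hu_def]
      simp [hw'1]
    have hu0 : u 0 = 0 := hW10 u hu hu1
    rw [hu_def] at hu0
    simp only [Pi.sub_apply, Pi.smul_apply, smul_eq_mul] at hu0
    rw [← ht_def] at hu0
    linear_combination hu0
  apply Submodule.eq_of_le_of_finrank_le hWle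
  rw [finrank_ker_lf, hW2]

open Projectivization in
lemma back {q : ℕ} (hq2 : 2 ≤ q) (hd : 1 ≤ d) (hK : Fintype.card K = q ^ 2)
    (hFd : F.IsHomogeneous d)
    (hRHS : ∃ L : Finset (Submodule K (Fin 3 → K)), L.card = d ∧
        (∀ W ∈ L, Module.finrank K W = 2 ∧
          ∀ x : Projectivization K (Fin 3 → K), x.submodule ≤ W →
            x.rep 0 ^ (q + 1) + x.rep 1 ^ (q + 1) = 0) ∧
        ∀ x : Projectivization K (Fin 3 → K),
          MvPolynomial.eval x.rep F = 0 ↔ ∃ W ∈ L, x.submodule ≤ W) :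
    Nat.card {x : Projectivization K (Fin 3 → K) //
        (x.rep 0 ^ (q + 1) + x.rep 1 ^ (q + 1) = 0) ∧ MvPolynomial.eval x.rep F = 0}
      = d * q ^ 2 + 1 := by
  classical
  obtain ⟨L, hL1, hL2, hL3⟩ := hRHS
  have CL : ∀ W ∈ L, ∃ t : K, (t ^ (q + 1) + 1 = 0) ∧ W = LinearMap.ker (lf t) :=
    fun W hW => classify_line (hL2 W hW).1 (hL2 W hW).2
  choose! tf htf1 htf2 using CL
  set E' := L.image tf with hE'
  have hE'card : E'.card = d := by
    rw [hE', Finset.card_image_of_injOn, hL1]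
    intro W hW W' hW' heq
    rw [htf2 W hW, htf2 W' hW', heq]
  have hE'T : ∀ t ∈ E', t ^ (q+1) + 1 = 0 := by
    intro t ht
    rw [hE', Finset.mem_image] at ht
    obtain ⟨W, hW, rfl⟩ := ht
    exact htf1 W hW
  -- the zero locus of F is the union of the lines
  have hzero : ∀ v : Fin 3 → K, v ≠ 0 →
      (MvPolynomial.eval v F = 0 ↔ ∃ t ∈ E', v 0 = t * v 1) := by
    intro v hv
    have hiff := hL3 (Projectivization.mk K v hv)
    obtain ⟨a, ha⟩ := Projectivization.exists_smul_eq_mk_rep K v hv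
    rw [Units.smul_def] at ha
    have heval : MvPolynomial.eval (Projectivization.mk K v hv).rep F
        = (a : K) ^ d * MvPolynomial.eval v F := by
      rw [← ha, eval_smul hFd]
    have hsubm : ∀ W, ((Projectivization.mk K v hv).submodule ≤ W ↔ v ∈ W) := by
      intro W
      rw [Projectivization.submodule_mk, Submodule.span_singleton_le_iff_mem]
    constructor
    · intro h0
      have : MvPolynomial.eval (Projectivization.mk K v hv).rep F = 0 := by
        rw [heval, h0, mul_zero]
      obtain ⟨W, hW, hle⟩ := hiff.mp this
      refine ⟨tf W, Finset.mem_image_of_mem tf hW, ?_⟩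
      have : v ∈ W := (hsubm W).mp hle
      rw [htf2 W hW, mem_ker_lf] at this
      exact this
    · intro ⟨t, ht, hvt⟩
      rw [hE', Finset.mem_image] at ht
      obtain ⟨W, hW, rfl⟩ := ht
      have hvW : v ∈ W := by
        rw [htf2 W hW, mem_ker_lf]
        exact hvt
      have h0 := hiff.mpr ⟨W, hW, (hsubm W).mpr hvW⟩
      rw [heval, mul_eq_zero] at h0
      rcases h0 with h | h
      · exact absurd h (pow_ne_zero _ (Units.ne_zero a))
      · exact h
  have hE'ne : E'.Nonempty := by
    rw [← Finset.card_pos, hE'card]; omega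
  rw [count_formula hFd]
  -- the P term
  have hP : MvPolynomial.eval ![(0:K),0,1] F = 0 := by
    rw [hzero ![0,0,1] e2_ne_zero]
    obtain ⟨t0, ht0⟩ := hE'ne
    exact ⟨t0, ht0, by simp⟩
  rw [if_pos hP]
  -- the rows
  have hrow : ∀ t : K, t ^ (q+1) + 1 = 0 →
      ((univ : Finset K).filter fun s => MvPolynomial.eval ![t,1,s] F = 0).card
        = if t ∈ E' then q ^ 2 else 0 := by
    intro t htT
    have hv : ∀ s : K, (![t,1,s] : Fin 3 → K) ≠ 0 := fun s => vec1_ne_zero (by simp)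
    have hiff : ∀ s : K, (MvPolynomial.eval ![t,1,s] F = 0 ↔ t ∈ E') := by
      intro s
      rw [hzero _ (hv s)]
      constructor
      · rintro ⟨t', ht', h⟩
        simp only [Matrix.cons_val_zero, Matrix.cons_val_one, Matrix.head_cons] at h
        rw [mul_one] at h
        rwa [h]
      · intro ht
        exact ⟨t, ht, by simp⟩
    split_ifs with ht
    · rw [Finset.filter_true_of_mem (fun s _ => (hiff s).mpr ht), Finset.card_univ, hK]
    · rw [Finset.filter_false_of_mem (fun s _ hc => ht ((hiff s).mp hc)),
        Finset.card_empty]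
  have hsub : E' ⊆ (univ : Finset K).filter (fun t => t ^ (q+1) + 1 = 0) := by
    intro t ht
    rw [Finset.mem_filter]
    exact ⟨Finset.mem_univ _, hE'T t ht⟩
  rw [Finset.sum_congr rfl (fun t ht => hrow t (Finset.mem_filter.mp ht).2)]
  rw [Finset.sum_ite_mem, Finset.inter_eq_right.mpr hsub, Finset.sum_const, hE'card,
    smul_eq_mul]
  ring

/-- eval at the point P = [0:0:1] -/
lemma eval_P (hFd : F.IsHomogeneous d) :
    MvPolynomial.eval ![(0:K),0,1] F = MvPolynomial.coeff (μ d 0 d) F := by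
  rw [eval_expand hFd]
  rw [Finset.sum_eq_single 0]
  · rw [Finset.sum_eq_single d]
    · simp
    · intro j hj hjne
      rw [mem_range, Nat.lt_succ_iff] at hj
      have : (![(0:K),0,1]) 1 ^ (d - 0 - j) = 0 := by
        simp only [Matrix.cons_val_one, Matrix.head_cons]
        exact zero_pow (by omega)
      rw [this]
      ring
    · intro h
      exact absurd (mem_range.mpr (by omega)) h
  · intro i hi hine
    apply Finset.sum_eq_zero
    intro j _
    have : (![(0:K),0,1]) 0 ^ i = 0 := by
      simp only [Matrix.cons_val_zero]
      exact zero_pow hine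
    rw [this]
    ring
  · intro h
    exact absurd (mem_range.mpr (by omega)) h

end Count
end Stmt10

set_option maxHeartbeats 1000000 in
open Finset Stmt10 in
/-- For the degenerate Hermitian curve `PU_1 = V(x_0^{q+1} + x_1^{q+1}) ⊆ ℙ²(F_{q²})`
and a plane curve `V(F)` of degree `d ≤ q`: `|PU_1 ∩ V(F)(F_{q²})| ≤ dq² + 1`, with
equality iff `V(F)` is a union of `d` lines each contained in `PU_1`. -/
theorem stmt10 (q d : ℕ) (hq : IsPrimePow q) (hd : 1 ≤ d) (hdq : d ≤ q)
    (K : Type) [Field K] [Fintype K] (hK : Fintype.card K = q ^ 2)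
    (F : MvPolynomial (Fin 3) K) (hF : F ≠ 0) (hFd : F.IsHomogeneous d) :
    Nat.card {x : Projectivization K (Fin 3 → K) //
        (x.rep 0 ^ (q + 1) + x.rep 1 ^ (q + 1) = 0) ∧ MvPolynomial.eval x.rep F = 0}
      ≤ d * q ^ 2 + 1 ∧
    (Nat.card {x : Projectivization K (Fin 3 → K) //
        (x.rep 0 ^ (q + 1) + x.rep 1 ^ (q + 1) = 0) ∧ MvPolynomial.eval x.rep F = 0}
        = d * q ^ 2 + 1 ↔
      ∃ L : Finset (Submodule K (Fin 3 → K)), L.card = d ∧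
        (∀ W ∈ L, Module.finrank K W = 2 ∧
          ∀ x : Projectivization K (Fin 3 → K), x.submodule ≤ W →
            x.rep 0 ^ (q + 1) + x.rep 1 ^ (q + 1) = 0) ∧
        ∀ x : Projectivization K (Fin 3 → K),
          MvPolynomial.eval x.rep F = 0 ↔ ∃ W ∈ L, x.submodule ≤ W) := by
  classical
  have hq2 : 2 ≤ q := hq.two_le
  set N := Nat.card {x : Projectivization K (Fin 3 → K) //
      (x.rep 0 ^ (q + 1) + x.rep 1 ^ (q + 1) = 0) ∧ MvPolynomial.eval x.rep F = 0} with hN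
  set Tf := (univ : Finset K).filter (fun t => t ^ (q+1) + 1 = 0) with hTf
  have hTcard : Tf.card = q + 1 := card_T hq2 hK
  letI hdecE : DecidablePred (fun t : K => ∀ j ∈ range (d+1), (cp F d j).eval t = 0) :=
    fun _ => Classical.propDecidable _
  set E := Tf.filter (fun t => ∀ j ∈ range (d+1), (cp F d j).eval t = 0) with hE
  set e := E.card with he
  have hEsub : E ⊆ Tf := filter_subset _ _
  have heq1 : e ≤ q + 1 := hTcard ▸ card_le_card hEsub
  have hS2 : ∀ j, j ≤ d → d < e + j → cp F d j = 0 := by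
    intro j hj hlt
    apply Polynomial.eq_zero_of_natDegree_lt_card_of_eval_eq_zero' (cp F d j) E
    · intro t ht
      exact (Finset.mem_filter.mp ht).2 j (mem_range.mpr (by omega))
    · exact lt_of_le_of_lt (cp_natDegree_le hFd j) (by omega)
  have hS1 : e ≤ d := by
    by_contra hc
    push_neg at hc
    apply hF
    apply F_eq_zero_of_cp hFd
    intro j hj
    rw [mem_range] at hj
    exact hS2 j (by omega) (by omega)
  set row : K → ℕ :=
    fun t => ((univ : Finset K).filter fun s => MvPolynomial.eval ![t,1,s] F = 0).card
    with hrowdef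
  have hrowE : ∀ t ∈ E, row t = q ^ 2 := by
    intro t ht
    have ht2 := (Finset.mem_filter.mp ht).2
    have hall : ∀ s : K, MvPolynomial.eval ![t,1,s] F = 0 := by
      intro s
      rw [eval_line hFd]
      apply Finset.sum_eq_zero
      intro j hj
      rw [ht2 j hj, zero_mul]
    rw [hrowdef]
    simp only
    rw [Finset.filter_true_of_mem (fun s _ => hall s), Finset.card_univ, hK]
  have hrowNE : ∀ t ∈ Tf \ E, row t ≤ d - e := by
    intro t ht
    rw [mem_sdiff] at ht
    have hne : gp F d t ≠ 0 := by
      intro h0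
      apply ht.2
      refine Finset.mem_filter.mpr ⟨ht.1, fun j hj => ?_⟩
      rw [mem_range, Nat.lt_succ_iff] at hj
      have hcj := gp_coeff F d t j
      rw [h0, Polynomial.coeff_zero, if_pos hj] at hcj
      exact hcj.symm
    have hdeg : (gp F d t).natDegree ≤ d - e := by
      rw [Polynomial.natDegree_le_iff_coeff_eq_zero]
      intro j hj
      rw [gp_coeff]
      split_ifs with h
      · rw [hS2 j h (by omega), Polynomial.eval_zero]
      · rfl
    have heqf : row t = ((univ : Finset K).filter fun s => (gp F d t).eval s = 0).card := by
      rw [hrowdef]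
      simp only
      congr 1
      apply Finset.filter_congr
      intro s _
      rw [gp_eval hFd]
    rw [heqf]
    exact le_trans (card_roots_le hne) hdeg
  have hcount : N = (if MvPolynomial.eval ![(0:K),0,1] F = 0 then 1 else 0)
      + ∑ t ∈ Tf, row t := count_formula hFd
  have hsum : ∑ t ∈ Tf, row t = e * q ^ 2 + ∑ t ∈ Tf \ E, row t := by
    rw [← Finset.sum_sdiff hEsub]
    rw [Finset.sum_congr rfl hrowE, Finset.sum_const, smul_eq_mul, he]
    ring
  have hsumNE : ∑ t ∈ Tf \ E, row t ≤ (q + 1 - e) * (d - e) := by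
    calc ∑ t ∈ Tf \ E, row t ≤ (Tf \ E).card * (d - e) := by
          apply Finset.sum_le_card_nsmul
          exact hrowNE
      _ = (q + 1 - e) * (d - e) := by rw [Finset.card_sdiff_of_subset hEsub, hTcard, he]
  rcases eq_or_lt_of_le hS1 with heqd | hlt
  · -- case e = d : equality
    have hrow0 : ∑ t ∈ Tf \ E, row t = 0 := by
      have := hsumNE
      rw [← heqd, Nat.sub_self, mul_zero] at this
      omega
    have hcd : cp F d d = 0 := hS2 d le_rfl (by omega)
    have hP : MvPolynomial.eval ![(0:K),0,1] F = 0 := by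
      rw [eval_P hFd]
      have := cp_coeff F d d 0
      rw [hcd, Polynomial.coeff_zero, if_pos (by omega)] at this
      exact this.symm
    have hNeq : N = d * q ^ 2 + 1 := by
      rw [hcount, if_pos hP, hsum, hrow0, heqd]
      ring
    have hRHS : ∃ L : Finset (Submodule K (Fin 3 → K)), L.card = d ∧
        (∀ W ∈ L, Module.finrank K W = 2 ∧
          ∀ x : Projectivization K (Fin 3 → K), x.submodule ≤ W →
            x.rep 0 ^ (q + 1) + x.rep 1 ^ (q + 1) = 0) ∧
        ∀ x : Projectivization K (Fin 3 → K),
          MvPolynomial.eval x.rep F = 0 ↔ ∃ W ∈ L, x.submodule ≤ W := by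
      obtain ⟨u, hu, PF⟩ := product_formula hF hFd hd (heqd ▸ he.symm)
        (fun t ht => (Finset.mem_filter.mp ht).2)
      refine ⟨E.image (fun t => LinearMap.ker (lf t)), ?_, ?_, ?_⟩
      · rw [Finset.card_image_of_injOn, ← he, heqd]
        intro t ht t' ht' heq
        have heq' : LinearMap.ker (lf t) = LinearMap.ker (lf t') := heq
        have h1 : (![t,(1:K),0]) ∈ LinearMap.ker (lf t) := by
          rw [mem_ker_lf]
          simp
        rw [heq', mem_ker_lf] at h1
        simpa using h1
      · intro W hW
        rw [Finset.mem_image] at hW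
        obtain ⟨t, ht, rfl⟩ := hW
        refine ⟨finrank_ker_lf t, ?_⟩
        intro x hx
        rw [submodule_le_ker] at hx
        have htT : t ^ (q+1) + 1 = 0 := (Finset.mem_filter.mp (hEsub ht)).2
        have ht1 : t ^ (q+1) = -1 := by linear_combination htT
        rw [hx, mul_pow, ht1]
        ring
      · intro x
        rw [PF x.rep, mul_eq_zero]
        constructor
        · intro h
          rcases h with h | h
          · exact absurd h hu
          · rw [Finset.prod_eq_zero_iff] at h
            obtain ⟨t, ht, htz⟩ := h
            refine ⟨LinearMap.ker (lf t), Finset.mem_image_of_mem _ ht, ?_⟩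
            rw [submodule_le_ker]
            linear_combination htz
        · rintro ⟨W, hW, hle⟩
          rw [Finset.mem_image] at hW
          obtain ⟨t, ht, rfl⟩ := hW
          rw [submodule_le_ker] at hle
          right
          rw [Finset.prod_eq_zero_iff]
          exact ⟨t, ht, by linear_combination hle⟩
    exact ⟨le_of_eq hNeq, by rw [hNeq]; simp [hRHS]⟩
  · -- case e < d : strict inequality
    have harith : 1 + (e * q ^ 2 + (q + 1 - e) * (d - e)) ≤ d * q ^ 2 := by
      obtain ⟨a, ha1, ha2⟩ : ∃ a, 1 ≤ a ∧ d = e + a := ⟨d - e, by omega, by omega⟩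
      have hde : d - e = a := by omega
      rw [hde]
      have hb : q + 1 - e ≤ q + 1 := by omega
      have hsq : q ^ 2 = q * q := sq q
      have hqq : q + 2 ≤ q ^ 2 := by
        have h1 : 2 * q ≤ q * q := Nat.mul_le_mul_right q hq2
        omega
      have step1 : (q + 1 - e) * a ≤ (q + 1) * a := Nat.mul_le_mul_right a hb
      have step2 : (q + 1) * a + 1 ≤ (q ^ 2 - 1) * a + 1 :=
        Nat.add_le_add_right (Nat.mul_le_mul_right a (by omega)) 1
      have step3 : (q ^ 2 - 1) * a + 1 ≤ q ^ 2 * a := by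
        obtain ⟨m, hm⟩ : ∃ m, q ^ 2 = m + 1 := ⟨q ^ 2 - 1, by omega⟩
        rw [hm]
        have h4 : (m + 1 - 1) = m := by omega
        rw [h4]
        have h5 : (m + 1) * a = m * a + a := by ring
        omega
      have hfin : d * q ^ 2 = e * q ^ 2 + q ^ 2 * a := by
        rw [ha2]
        ring
      omega
    have hNle : N ≤ d * q ^ 2 := by
      have hpterm : (if MvPolynomial.eval ![(0:K),0,1] F = 0 then 1 else 0) ≤ 1 := by
        split_ifs <;> omega
      rw [hcount]
      have := hsumNE
      rw [hsum]
      omega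
    constructor
    · omega
    · constructor
      · intro h
        omega
      · intro hRHS
        have := back hq2 hd hK hFd hRHS
        rw [← hN] at this
        omega
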